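/- For n ≥ 2 set d := 2n+2, q(n) := (1, …, 1, 3n, 10n, 15n) ∈ ℤ^d (with 2n−1 ones), and Δ_n := conv{e_1, …, e_d, −q(n)} ⊆ ℝ^d. Define c_0 = 1, c_1 = 7, c_2 = 15, c_3 = 14, and for j ≥ 4, c_j = 16 if j is even and c_j = 14 if j is odd. Then for every j ≥ 0 there exists N such that for all n ≥ N, the coefficient of X^j in (1−X)^{2n+3}·Ehr_{Δ_n}(X) equals c_j. That is, the h*-polynomials of the Δ_n converge in ℤ[[X]] to the series 1 + 7X + 15X² + 14X³ + 16X⁴ + 14X⁵ + 16X⁶ + 14X⁷ + ⋯. -/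

import Mathlib

open scoped BigOperators Pointwise

/-- Ehrhart series of a (bounded) set `P ⊆ ℝ^n`: the coefficient of `X^t` is the
number of lattice points of `ℤ^n` in the dilate `t • P`. -/
noncomputable def ehrhartSeries {n : ℕ} (P : Set (Fin n → ℝ)) : PowerSeries ℤ :=
  PowerSeries.mk fun t =>
    (Set.ncard {x : Fin n → ℤ | (fun i => (x i : ℝ)) ∈ (t : ℝ) • P} : ℤ)

/-- The vector `q(n) = (1,…,1,3n,10n,15n) ∈ ℤ^{2n+2}` with `2n-1` ones. -/
def qvec (n : ℕ) : Fin (2 * n + 2) → ℤ := fun i =>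
  if (i : ℕ) < 2 * n - 1 then 1
  else if (i : ℕ) = 2 * n - 1 then 3 * n
  else if (i : ℕ) = 2 * n then 10 * n
  else 15 * n

/-- The simplex `Δ_{(1,q(n))} = conv{e_1, …, e_d, -q(n)} ⊆ ℝ^{2n+2}`. -/
noncomputable def deltaQ (n : ℕ) : Set (Fin (2 * n + 2) → ℝ) :=
  convexHull ℝ
    ((Set.range fun i : Fin (2 * n + 2) => fun j : Fin (2 * n + 2) =>
        if j = i then (1 : ℝ) else 0) ∪
      {fun i => -(qvec n i : ℝ)})

/-- Coefficients of the limit series `1 + 7X + 15X² + 14X³ + 16X⁴ + 14X⁵ + 16X⁶ + ⋯`. -/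
def creflex (j : ℕ) : ℤ :=
  if j = 0 then 1 else if j = 1 then 7 else if j = 2 then 15 else if j = 3 then 14
  else if j % 2 = 0 then 16 else 14

/-- weight function -/
def wt (b : ℕ) : ℕ := b - b / 10 - b / 3 - b / 2

/-- floor vector ⌊b q_i / 30n⌋ -/
def phiv (n b : ℕ) : Fin (2 * n + 2) → ℤ := fun i =>
  if (i : ℕ) < 2 * n - 1 then 0
  else if (i : ℕ) = 2 * n - 1 then (b / 10 : ℕ)
  else if (i : ℕ) = 2 * n then (b / 3 : ℕ)
  else (b / 2 : ℕ)

lemma sum_split {M : Type*} [AddCommMonoid M] {n : ℕ} (hn : 1 ≤ n) (f : ℕ → M) :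
    ∑ i ∈ Finset.range (2 * n + 2), f i =
      (∑ i ∈ Finset.range (2 * n - 1), f i) + f (2 * n - 1) + f (2 * n) + f (2 * n + 1) := by
  obtain ⟨m, rfl⟩ := Nat.exists_eq_add_of_le hn
  rw [show 2*(1+m)+2 = (2*m+1)+1+1+1 from by ring, Finset.sum_range_succ, Finset.sum_range_succ,
    Finset.sum_range_succ, show 2*(1+m)-1 = 2*m+1 from by omega,
    show 2*(1+m) = 2*m+1+1 from by omega]

lemma sum_qvec {n : ℕ} (hn : 1 ≤ n) : ∑ i, qvec n i = 30 * n - 1 := by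
  have h : (∑ i, qvec n i) = ∑ i ∈ Finset.range (2*n+2),
      (fun k : ℕ => if k < 2 * n - 1 then (1:ℤ) else if k = 2 * n - 1 then 3 * n
        else if k = 2 * n then 10 * n else 15 * n) i :=
    Fin.sum_univ_eq_sum_range (fun k : ℕ => if k < 2 * n - 1 then (1:ℤ)
      else if k = 2 * n - 1 then 3 * n else if k = 2 * n then 10 * n else 15 * n) (2*n+2)
  rw [h, sum_split hn]
  rw [if_neg (by omega), if_pos rfl, if_neg (by omega), if_neg (by omega), if_pos rfl,
    if_neg (by omega), if_neg (by omega), if_neg (by omega)]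
  rw [Finset.sum_congr rfl (fun i hi => if_pos (Finset.mem_range.mp hi)), Finset.sum_const,
    Finset.card_range]
  simp only [nsmul_eq_mul, mul_one]
  omega

lemma sum_phiv {n : ℕ} (hn : 1 ≤ n) (b : ℕ) :
    ∑ i, phiv n b i = (b / 10 : ℕ) + (b / 3 : ℕ) + (b / 2 : ℕ) := by
  have h : (∑ i, phiv n b i) = ∑ i ∈ Finset.range (2*n+2),
      (fun k : ℕ => if k < 2 * n - 1 then (0:ℤ) else if k = 2 * n - 1 then (b / 10 : ℕ)
        else if k = 2 * n then (b / 3 : ℕ) else (b / 2 : ℕ)) i :=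
    Fin.sum_univ_eq_sum_range (fun k : ℕ => if k < 2 * n - 1 then (0:ℤ)
      else if k = 2 * n - 1 then (b / 10 : ℕ) else if k = 2 * n then (b / 3 : ℕ)
      else (b / 2 : ℕ)) (2*n+2)
  rw [h, sum_split hn]
  rw [if_neg (by omega), if_pos rfl, if_neg (by omega), if_neg (by omega), if_pos rfl,
    if_neg (by omega), if_neg (by omega), if_neg (by omega)]
  rw [Finset.sum_congr rfl (fun i hi => if_pos (Finset.mem_range.mp hi)), Finset.sum_const]
  simp

lemma phiv_le {n : ℕ} (hn : 1 ≤ n) {b : ℕ} (hb : b < 30 * n) (i : Fin (2 * n + 2)) :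
    30 * n * phiv n b i ≤ b * qvec n i ∧ b * qvec n i < 30 * n * phiv n b i + 30 * n := by
  unfold phiv qvec
  split_ifs with h1 h2 h3
  · constructor
    · simp
    · push_cast; omega
  · push_cast
    constructor <;> nlinarith [Nat.mul_div_le b 10, Nat.lt_mul_div_succ b (by norm_num : 0 < 10), hn]
  · push_cast
    constructor <;> nlinarith [Nat.mul_div_le b 3, Nat.lt_mul_div_succ b (by norm_num : 0 < 3), hn]
  · push_cast
    constructor <;> nlinarith [Nat.mul_div_le b 2, Nat.lt_mul_div_succ b (by norm_num : 0 < 2), hn]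

lemma wt_sub (b : ℕ) : (wt b : ℤ) = b - b/10 - b/3 - b/2 := by
  unfold wt; push_cast; omega

lemma mem_deltaQ {n : ℕ} (hn : 1 ≤ n) (y : Fin (2 * n + 2) → ℝ) :
    y ∈ deltaQ n ↔
      (∑ i, y i) ≤ 1 ∧ ∀ i, 0 ≤ (30 * n : ℝ) * y i + (1 - ∑ i, y i) * (qvec n i : ℝ) := by
  have hn' : (1:ℝ) ≤ (n:ℝ) := by exact_mod_cast hn
  have hR : (0:ℝ) < 30 * n := by linarith
  have hqsum : (∑ i, (qvec n i : ℝ)) = 30 * n - 1 := by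
    rw [← Int.cast_sum]
    rw [sum_qvec hn]
    push_cast
    ring
  constructor
  · intro hy
    have key : deltaQ n ⊆ {y : Fin (2 * n + 2) → ℝ |
        (∑ i, y i) ≤ 1 ∧ ∀ i, 0 ≤ (30 * n : ℝ) * y i + (1 - ∑ i, y i) * (qvec n i : ℝ)} := by
      apply convexHull_min
      · rintro z (⟨k, rfl⟩ | hz)
        · have hS : (∑ i, (if i = k then (1:ℝ) else 0)) = 1 := by
            simp
          refine ⟨le_of_eq hS, fun i => ?_⟩
          rw [hS]
          simp only [sub_self, zero_mul, add_zero]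
          split_ifs
          · linarith
          · simp
        · simp only [Set.mem_singleton_iff] at hz
          subst hz
          have hS : (∑ i, -(qvec n i : ℝ)) = 1 - 30 * n := by
            rw [Finset.sum_neg_distrib, hqsum]; ring
          refine ⟨by rw [hS]; linarith, fun i => ?_⟩
          rw [hS]
          show 0 ≤ (30:ℝ) * n * -(qvec n i : ℝ) + (1 - (1 - 30 * n)) * (qvec n i : ℝ)
          have : (30:ℝ) * n * -(qvec n i : ℝ) + (1 - (1 - 30 * n)) * (qvec n i : ℝ) = 0 := by ring
          linarith
      · intro y hy z hz a b ha hb hab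
        have hsum : ∀ (u v : Fin (2*n+2) → ℝ),
            ∑ i, (a • u + b • v) i = a * ∑ i, u i + b * ∑ i, v i := by
          intro u v
          simp [Finset.sum_add_distrib, Finset.mul_sum]
        constructor
        · rw [hsum]
          nlinarith [hy.1, hz.1]
        · intro i
          rw [hsum]
          simp only [Pi.add_apply, Pi.smul_apply, smul_eq_mul]
          have key : (30*n:ℝ) * (a * y i + b * z i) +
              (1 - (a * ∑ i, y i + b * ∑ i, z i)) * (qvec n i : ℝ) =
              a * ((30*n:ℝ) * y i + (1 - ∑ i, y i) * (qvec n i : ℝ)) +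
              b * ((30*n:ℝ) * z i + (1 - ∑ i, z i) * (qvec n i : ℝ)) := by
            linear_combination (-(qvec n i : ℝ)) * hab
          rw [key]
          exact add_nonneg (mul_nonneg ha (hy.2 i)) (mul_nonneg hb (hz.2 i))
    exact key hy
  · rintro ⟨h1, h2⟩
    set Sy := ∑ i, y i with hSy
    set μ : ℝ := (1 - Sy) / (30 * n) with hμ
    have hμR : μ * (30 * n) = 1 - Sy := div_mul_cancel₀ _ (ne_of_gt hR)
    have hμ0 : 0 ≤ μ := div_nonneg (by linarith) (le_of_lt hR)
    set w : Fin (2 * n + 2 + 1) → ℝ :=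
        Fin.lastCases μ (fun k => y k + μ * (qvec n k : ℝ)) with hw
    set z : Fin (2 * n + 2 + 1) → (Fin (2 * n + 2) → ℝ) :=
        Fin.lastCases (fun i => -(qvec n i : ℝ))
          (fun k => fun j => if j = k then (1:ℝ) else 0) with hzdef
    have hwnn : ∀ i, 0 ≤ w i := by
      intro i
      refine Fin.lastCases ?_ ?_ i
      · rw [hw]; simp only [Fin.lastCases_last]; exact hμ0
      · intro k
        rw [hw]; simp only [Fin.lastCases_castSucc]
        have hthis := h2 k
        have e : (30*n:ℝ) * (y k + μ * (qvec n k : ℝ)) =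
            (30*n:ℝ) * y k + (1 - Sy) * (qvec n k : ℝ) := by
          linear_combination (qvec n k : ℝ) * hμR
        nlinarith [hthis, e, hR]
    have hsw : ∑ i, w i = 1 := by
      rw [Fin.sum_univ_castSucc]
      rw [hw]
      simp only [Fin.lastCases_last, Fin.lastCases_castSucc]
      rw [Finset.sum_add_distrib, ← Finset.mul_sum, hqsum]
      nlinarith [hμR]
    have heq : ∑ i, w i • z i = y := by
      funext j
      rw [Finset.sum_apply]
      rw [Fin.sum_univ_castSucc]
      rw [hw, hzdef]
      simp only [Fin.lastCases_last, Fin.lastCases_castSucc, Pi.smul_apply, smul_eq_mul,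
        mul_ite, mul_one, mul_zero]
      rw [Finset.sum_ite_eq Finset.univ j (fun k => y k + μ * (qvec n k : ℝ))]
      simp only [Finset.mem_univ, if_true]
      ring
    rw [← heq]
    apply (convex_convexHull ℝ _).sum_mem (fun i _ => hwnn i) hsw
    intro i _
    apply subset_convexHull
    refine Fin.lastCases ?_ ?_ i
    · rw [hzdef]; simp only [Fin.lastCases_last]
      exact Or.inr rfl
    · intro k
      rw [hzdef]; simp only [Fin.lastCases_castSucc]
      exact Or.inl ⟨k, rfl⟩

lemma mem_dilate {n : ℕ} (hn : 1 ≤ n) (t : ℕ) (x : Fin (2 * n + 2) → ℤ) :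
    ((fun i => (x i : ℝ)) ∈ (t : ℝ) • deltaQ n) ↔
      ((∑ i, x i) ≤ (t : ℤ) ∧
        ∀ i, 0 ≤ (30 * n : ℤ) * x i + ((t : ℤ) - ∑ i, x i) * qvec n i) := by
  rcases Nat.eq_zero_or_pos t with rfl | ht
  · have hne : (deltaQ n).Nonempty :=
      ⟨_, subset_convexHull ℝ _ (Or.inr rfl)⟩
    rw [Nat.cast_zero, Set.zero_smul_set hne]
    constructor
    · intro hx
      have hx0 : ∀ i, x i = 0 := by
        intro i
        have := congrFun hx i
        simp only [Pi.zero_apply] at this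
        exact_mod_cast this
      constructor
      · simp [Finset.sum_congr rfl fun i _ => hx0 i]
      · intro i
        simp [hx0 i, Finset.sum_congr rfl fun j _ => hx0 j]
    · rintro ⟨hs, hineq⟩
      simp only [Nat.cast_zero] at hs hineq
      have key : ∑ i, ((30 * n : ℤ) * x i + ((0:ℤ) - ∑ j, x j) * qvec n i) = ∑ j, x j := by
        rw [Finset.sum_add_distrib, ← Finset.mul_sum, ← Finset.mul_sum, sum_qvec hn]
        push_cast
        ring
      have hSnn : (0:ℤ) ≤ ∑ j, x j := by
        have := Finset.sum_nonneg (fun i (_ : i ∈ Finset.univ) => hineq i)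
        rw [key] at this
        exact this
      have hS0 : (∑ j, x j) = 0 := le_antisymm (by exact_mod_cast hs) hSnn
      have hx0 : ∀ i, x i = 0 := by
        have hnn : ∀ i ∈ Finset.univ, (0:ℤ) ≤ x i := by
          intro i _
          have h := hineq i
          rw [hS0] at h
          simp only [sub_zero, zero_mul, add_zero] at h
          have hn1 : (1:ℤ) ≤ (n:ℤ) := by exact_mod_cast hn
          nlinarith [h, hn1]
        intro i
        exact (Finset.sum_eq_zero_iff_of_nonneg hnn).mp hS0 i (Finset.mem_univ i)
      funext i
      simp [hx0 i]
  · have htR : (0:ℝ) < t := by exact_mod_cast ht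
    have htne : (t:ℝ) ≠ 0 := ne_of_gt htR
    rw [Set.mem_smul_set_iff_inv_smul_mem₀ htne, mem_deltaQ hn]
    have hcoord : ∀ i, ((t:ℝ)⁻¹ • fun j => (x j : ℝ)) i = (t:ℝ)⁻¹ * (x i : ℝ) := by
      intro i; simp
    have hsum : (∑ i, ((t:ℝ)⁻¹ • fun j => (x j : ℝ)) i) = (t:ℝ)⁻¹ * ((∑ i, x i : ℤ) : ℝ) := by
      rw [Finset.sum_congr rfl fun i _ => hcoord i, ← Finset.mul_sum]
      push_cast
      ring
    rw [hsum]
    constructor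
    · rintro ⟨hA, hB⟩
      constructor
      · have h' : ((∑ i, x i : ℤ) : ℝ) ≤ (t:ℝ) := by
          have := mul_le_mul_of_nonneg_left hA htR.le
          rw [mul_one, ← mul_assoc, mul_inv_cancel₀ htne, one_mul] at this
          exact this
        exact_mod_cast h'
      · intro i
        have h := hB i
        rw [hcoord i] at h
        have h' := mul_le_mul_of_nonneg_left h htR.le
        rw [mul_zero] at h'
        have e : (t:ℝ) * ((30 * n : ℝ) * ((t:ℝ)⁻¹ * (x i : ℝ)) +
            (1 - (t:ℝ)⁻¹ * ((∑ i, x i : ℤ) : ℝ)) * (qvec n i : ℝ)) =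
            (30 * n : ℝ) * (x i : ℝ) + ((t:ℝ) - ((∑ i, x i : ℤ) : ℝ)) * (qvec n i : ℝ) := by
          field_simp
        rw [e] at h'
        exact_mod_cast h'
    · rintro ⟨hA, hB⟩
      constructor
      · have h' : ((∑ i, x i : ℤ) : ℝ) ≤ (t:ℝ) := by exact_mod_cast hA
        have := mul_le_mul_of_nonneg_left h' (inv_nonneg.mpr htR.le)
        rw [inv_mul_cancel₀ htne] at this
        exact this
      · intro i
        rw [hcoord i]
        have h : (0:ℝ) ≤ (30 * n : ℝ) * (x i : ℝ) +
            ((t:ℝ) - ((∑ i, x i : ℤ) : ℝ)) * (qvec n i : ℝ) := by exact_mod_cast hB i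
        have h' := mul_le_mul_of_nonneg_left h (inv_nonneg.mpr htR.le)
        rw [mul_zero] at h'
        have e : (t:ℝ)⁻¹ * ((30 * n : ℝ) * (x i : ℝ) +
            ((t:ℝ) - ((∑ i, x i : ℤ) : ℝ)) * (qvec n i : ℝ)) =
            (30 * n : ℝ) * ((t:ℝ)⁻¹ * (x i : ℝ)) +
            (1 - (t:ℝ)⁻¹ * ((∑ i, x i : ℤ) : ℝ)) * (qvec n i : ℝ) := by
          field_simp
        rw [e] at h'
        exact h'

def Phi (n b : ℕ) (m : Fin (2 * n + 2 + 1) → ℕ) : Fin (2 * n + 2) → ℤ :=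
  fun i => (m i.castSucc : ℤ) - (m (Fin.last (2 * n + 2)) : ℤ) * qvec n i - phiv n b i

lemma sum_Phi {n : ℕ} (hn : 1 ≤ n) {t b : ℕ} (m : Fin (2 * n + 2 + 1) → ℕ)
    (hwb : wt b ≤ t) (hm : ∑ i, m i = t - wt b) :
    ∑ i, Phi n b m i = (t : ℤ) - (m (Fin.last (2 * n + 2)) : ℤ) * (30 * n) - b := by
  unfold Phi
  rw [Finset.sum_sub_distrib, Finset.sum_sub_distrib, ← Finset.mul_sum, sum_qvec hn,
    sum_phiv hn]
  have h1 : (∑ i : Fin (2 * n + 2), (m i.castSucc : ℤ)) + (m (Fin.last (2 * n + 2)) : ℤ) =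
      ((t - wt b : ℕ) : ℤ) := by
    rw [← hm, ← Fin.sum_univ_castSucc (fun i => (m i : ℤ))]
    push_cast
    rfl
  have h2 : ((t - wt b : ℕ) : ℤ) = (t : ℤ) - wt b := by omega
  have h3 : (wt b : ℤ) = (b : ℤ) - (b/10 : ℕ) - (b/3 : ℕ) - (b/2 : ℕ) := by
    unfold wt; push_cast; omega
  rw [h2, h3] at h1
  linarith [h1]

lemma Phi_mem {n : ℕ} (hn : 1 ≤ n) {t b : ℕ} (hb : b < 30 * n) (hwb : wt b ≤ t)
    (m : Fin (2 * n + 2 + 1) → ℕ) (hm : ∑ i, m i = t - wt b) :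
    (∑ i, Phi n b m i) ≤ (t : ℤ) ∧
      ∀ i, 0 ≤ (30 * n : ℤ) * Phi n b m i + ((t : ℤ) - ∑ i, Phi n b m i) * qvec n i := by
  have hsum := sum_Phi hn m hwb hm
  constructor
  · rw [hsum]
    have : (0:ℤ) ≤ (m (Fin.last (2 * n + 2)) : ℤ) * (30 * n) := by positivity
    have hb' : (0:ℤ) ≤ b := by positivity
    linarith
  · intro i
    have key : (30 * n : ℤ) * Phi n b m i + ((t : ℤ) - ∑ j, Phi n b m j) * qvec n i =
        (30 * n : ℤ) * (m i.castSucc : ℤ) + ((b : ℤ) * qvec n i - 30 * n * phiv n b i) := by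
      rw [hsum]
      unfold Phi
      ring
    rw [key]
    have h1 := (phiv_le hn hb i).1
    have h2 : (0:ℤ) ≤ (30 * n : ℤ) * (m i.castSucc : ℤ) := by positivity
    linarith

set_option maxHeartbeats 1000000 in
lemma Phi_inj {n : ℕ} (hn : 1 ≤ n) {t b b' : ℕ} {m m' : Fin (2 * n + 2 + 1) → ℕ}
    (hb : b < 30 * n) (hb' : b' < 30 * n) (hwb : wt b ≤ t) (hwb' : wt b' ≤ t)
    (hm : ∑ i, m i = t - wt b) (hm' : ∑ i, m' i = t - wt b')
    (h : Phi n b m = Phi n b' m') : b = b' ∧ m = m' := by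
  have hs : ∑ i, Phi n b m i = ∑ i, Phi n b' m' i := by rw [h]
  rw [sum_Phi hn m hwb hm, sum_Phi hn m' hwb' hm'] at hs
  have hn1 : (1:ℤ) ≤ (n:ℤ) := by exact_mod_cast hn
  have h30 : (0:ℤ) < 30 * n := by linarith
  have heq : (m (Fin.last (2 * n + 2)) : ℤ) * (30 * n) + b =
      (m' (Fin.last (2 * n + 2)) : ℤ) * (30 * n) + b' := by linarith [hs]
  have hbZ : (b:ℤ) < 30 * n := by exact_mod_cast hb
  have hbZ' : (b':ℤ) < 30 * n := by exact_mod_cast hb'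
  have hb0 : (0:ℤ) ≤ b := by positivity
  have hb0' : (0:ℤ) ≤ b' := by positivity
  have hm0eq : (m (Fin.last (2 * n + 2)) : ℤ) = (m' (Fin.last (2 * n + 2)) : ℤ) := by
    rcases lt_trichotomy (m (Fin.last (2 * n + 2)) : ℤ) (m' (Fin.last (2 * n + 2)) : ℤ)
      with hlt | he | hgt
    · have step : ((m (Fin.last (2 * n + 2)) : ℤ) + 1) * (30 * n) ≤
          (m' (Fin.last (2 * n + 2)) : ℤ) * (30 * n) :=
        mul_le_mul_of_nonneg_right (by linarith) (le_of_lt h30)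
      nlinarith [step, heq]
    · exact he
    · have step : ((m' (Fin.last (2 * n + 2)) : ℤ) + 1) * (30 * n) ≤
          (m (Fin.last (2 * n + 2)) : ℤ) * (30 * n) :=
        mul_le_mul_of_nonneg_right (by linarith) (le_of_lt h30)
      nlinarith [step, heq]
  have hL : m (Fin.last (2 * n + 2)) = m' (Fin.last (2 * n + 2)) := by exact_mod_cast hm0eq
  have hbb : b = b' := by
    have : (b : ℤ) = b' := by rw [hm0eq] at heq; linarith
    exact_mod_cast this
  subst hbb
  refine ⟨rfl, funext fun i => ?_⟩
  refine Fin.lastCases ?_ ?_ i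
  · exact hL
  · intro k
    have := congrFun h k
    unfold Phi at this
    rw [hL] at this
    omega

set_option maxHeartbeats 1000000 in
lemma Phi_surj {n : ℕ} (hn : 1 ≤ n) {t : ℕ} (x : Fin (2 * n + 2) → ℤ)
    (hs : (∑ i, x i) ≤ (t : ℤ))
    (hineq : ∀ i, 0 ≤ (30 * n : ℤ) * x i + ((t : ℤ) - ∑ i, x i) * qvec n i) :
    ∃ (b : ℕ) (m : Fin (2 * n + 2 + 1) → ℕ), b < 30 * n ∧ wt b ≤ t ∧
      (∑ i, m i = t - wt b) ∧ Phi n b m = x := by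
  have hRpos : 0 < 30 * n := by omega
  have hk0 : (0:ℤ) ≤ (t : ℤ) - ∑ i, x i := by linarith
  set k : ℕ := ((t : ℤ) - ∑ i, x i).toNat with hkdef
  have hkZ : (k : ℤ) = (t : ℤ) - ∑ i, x i := Int.toNat_of_nonneg hk0
  set b : ℕ := k % (30 * n) with hbdef
  set m0 : ℕ := k / (30 * n) with hm0def
  have hb : b < 30 * n := Nat.mod_lt _ hRpos
  have hdm : 30 * n * m0 + b = k := Nat.div_add_mod k (30 * n)
  have hkZ' : (t : ℤ) - ∑ i, x i = 30 * n * (m0 : ℤ) + b := by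
    rw [← hkZ]; exact_mod_cast hdm.symm
  set mi : Fin (2 * n + 2) → ℤ := fun i => x i + (m0 : ℤ) * qvec n i + phiv n b i with hmidef
  have hminn : ∀ i, 0 ≤ mi i := by
    intro i
    have e : (30 * n : ℤ) * mi i =
        ((30 * n : ℤ) * x i + ((t : ℤ) - ∑ j, x j) * qvec n i) +
          ((30 * n : ℤ) * phiv n b i - (b : ℤ) * qvec n i) := by
      rw [hkZ']
      simp only [hmidef]
      ring
    have h2 := (phiv_le hn hb i).2
    have h3 := hineq i
    by_contra hneg
    push_neg at hneg
    have h4 : mi i ≤ -1 := by omega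
    have h5 : (30 * n : ℤ) * mi i ≤ (30 * n : ℤ) * (-1) := by
      apply mul_le_mul_of_nonneg_left h4
      positivity
    have hn30 : (30 : ℤ) * n = ((30 * n : ℕ) : ℤ) := by push_cast; ring
    omega
  set m : Fin (2 * n + 2 + 1) → ℕ :=
    Fin.lastCases m0 (fun i => (mi i).toNat) with hmdef
  have hcast : ∀ i : Fin (2 * n + 2), (m i.castSucc : ℤ) = mi i := by
    intro i
    simp only [hmdef, Fin.lastCases_castSucc]
    exact Int.toNat_of_nonneg (hminn i)
  have hlast : m (Fin.last (2 * n + 2)) = m0 := by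
    simp only [hmdef, Fin.lastCases_last]
  have hsum_mi : ∑ i, mi i = (∑ i, x i) + (m0 : ℤ) * (30 * n - 1) +
      ((b/10 : ℕ) + (b/3 : ℕ) + (b/2 : ℕ)) := by
    simp only [hmidef]
    rw [Finset.sum_add_distrib, Finset.sum_add_distrib, ← Finset.mul_sum, sum_qvec hn,
      sum_phiv hn]
  have hsum_m : (∑ i, (m i : ℤ)) = (t : ℤ) - ((b:ℤ) - (b/10 : ℕ) - (b/3 : ℕ) - (b/2 : ℕ)) := by
    rw [Fin.sum_univ_castSucc (fun i => (m i : ℤ))]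
    rw [Finset.sum_congr rfl fun i _ => hcast i, hlast, hsum_mi]
    have := hkZ'
    push_cast
    push_cast at this
    linarith
  have hwtb : (wt b : ℤ) = (b:ℤ) - (b/10 : ℕ) - (b/3 : ℕ) - (b/2 : ℕ) := by
    unfold wt; push_cast; omega
  have hsum_m' : (∑ i, (m i : ℤ)) = (t : ℤ) - (wt b : ℤ) := by rw [hsum_m, hwtb]
  have hmnn : (0:ℤ) ≤ ∑ i, (m i : ℤ) := Finset.sum_nonneg fun i _ => by positivity
  have hwbt : wt b ≤ t := by omega
  have hsumN : ∑ i, m i = t - wt b := by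
    have : ((∑ i, m i : ℕ) : ℤ) = ((t - wt b : ℕ) : ℤ) := by
      push_cast
      omega
    exact_mod_cast this
  refine ⟨b, m, hb, hwbt, hsumN, ?_⟩
  funext i
  unfold Phi
  rw [hcast i, hlast]
  simp only [hmidef]
  ring

lemma card_tuples (D k : ℕ) :
    Nat.card {m : Fin (D + 1) → ℕ // ∑ i, m i = k} = (k + D).choose D := by
  have e := Sym.equivNatSumOfFintype (Fin (D + 1)) k
  rw [Nat.card_congr e.symm, Nat.card_eq_fintype_card, Sym.card_sym_eq_choose,
    Fintype.card_fin]
  rw [show D + 1 + k - 1 = k + D by omega]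
  have h := Nat.choose_symm (show k ≤ k + D by omega)
  rw [show k + D - k = D by omega] at h
  exact h.symm

lemma card_A {n : ℕ} (hn : 1 ≤ n) (t : ℕ) :
    Set.ncard {x : Fin (2 * n + 2) → ℤ | (∑ i, x i) ≤ (t : ℤ) ∧
        ∀ i, 0 ≤ (30 * n : ℤ) * x i + ((t : ℤ) - ∑ i, x i) * qvec n i} =
      ∑ b ∈ (Finset.range (30 * n)).filter (fun b => wt b ≤ t),
        (t - wt b + (2 * n + 2)).choose (2 * n + 2) := by
  classical
  set A : Set (Fin (2 * n + 2) → ℤ) := {x | (∑ i, x i) ≤ (t : ℤ) ∧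
      ∀ i, 0 ≤ (30 * n : ℤ) * x i + ((t : ℤ) - ∑ i, x i) * qvec n i} with hA
  set B : Finset ℕ := (Finset.range (30 * n)).filter (fun b => wt b ≤ t) with hB
  have hBmem : ∀ b : ℕ, b ∈ B ↔ b < 30 * n ∧ wt b ≤ t := by
    intro b; simp [hB]
  -- the bijection
  set F : (Σ b : B, {m : Fin (2 * n + 2 + 1) → ℕ // ∑ i, m i = t - wt (b : ℕ)}) → A :=
    fun p => ⟨Phi n (p.1 : ℕ) p.2.1, by
      have hb := (hBmem _).mp p.1.2
      exact Phi_mem hn hb.1 hb.2 p.2.1 p.2.2⟩ with hF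
  have hbij : Function.Bijective F := by
    constructor
    · rintro ⟨⟨b, hb⟩, ⟨m, hm⟩⟩ ⟨⟨b', hb'⟩, ⟨m', hm'⟩⟩ h
      have h' : Phi n b m = Phi n b' m' := congrArg Subtype.val h
      obtain ⟨rfl, rfl⟩ := Phi_inj hn ((hBmem b).mp hb).1 ((hBmem b').mp hb').1
        ((hBmem b).mp hb).2 ((hBmem b').mp hb').2 hm hm' h'
      rfl
    · rintro ⟨x, hx⟩
      obtain ⟨b, m, hb, hwb, hm, hPhi⟩ := Phi_surj hn x hx.1 hx.2
      exact ⟨⟨⟨b, (hBmem b).mpr ⟨hb, hwb⟩⟩, ⟨m, hm⟩⟩, Subtype.ext hPhi⟩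
  haveI : ∀ k : ℕ, Fintype {m : Fin (2 * n + 2 + 1) → ℕ // ∑ i, m i = k} := fun k =>
    Fintype.ofEquiv _ (Sym.equivNatSumOfFintype (Fin (2 * n + 2 + 1)) k)
  have h1 : A.ncard = Nat.card (Σ b : B, {m : Fin (2 * n + 2 + 1) → ℕ // ∑ i, m i = t - wt (b : ℕ)}) := by
    rw [← Nat.card_coe_set_eq A]
    exact (Nat.card_eq_of_bijective F hbij).symm
  rw [h1, Nat.card_eq_fintype_card, Fintype.card_sigma]
  have h2 : ∀ b : B, Fintype.card {m : Fin (2 * n + 2 + 1) → ℕ // ∑ i, m i = t - wt (b : ℕ)} =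
      (t - wt (b : ℕ) + (2 * n + 2)).choose (2 * n + 2) := by
    intro b
    rw [← Nat.card_eq_fintype_card]
    exact card_tuples (2 * n + 2) (t - wt (b : ℕ))
  rw [Finset.sum_congr rfl fun b _ => h2 b]
  exact Finset.sum_coe_sort B (fun b => (t - wt b + (2 * n + 2)).choose (2 * n + 2))

lemma wt_add30 (b : ℕ) : wt (b + 30) = wt b + 2 := by simp only [wt]; omega

lemma wt_le15 {b j : ℕ} (h : wt b = j) : b ≤ 15 * j := by simp only [wt] at h; omega

lemma wt_lt30 {b : ℕ} (h : b < 30) : wt b ≤ 4 := by simp only [wt]; omega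

def G (j : ℕ) : ℕ := ((Finset.range (15 * j + 1)).filter (fun b => wt b = j)).card

lemma Gstep (j : ℕ) (hj : 3 ≤ j) : G (j + 2) = G j := by
  symm
  unfold G
  apply Finset.card_bij (fun b _ => b + 30)
  · intro a ha
    simp only [Finset.mem_filter, Finset.mem_range] at ha ⊢
    exact ⟨by omega, by rw [wt_add30, ha.2]⟩
  · intro a ha a' ha' h
    omega
  · intro c hc
    simp only [Finset.mem_filter, Finset.mem_range] at hc
    have hge : 30 ≤ c := by
      by_contra hlt
      have := wt_lt30 (by omega : c < 30)
      omega
    refine ⟨c - 30, ?_, by omega⟩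
    simp only [Finset.mem_filter, Finset.mem_range]
    have h2 : wt (c - 30 + 30) = wt (c - 30) + 2 := wt_add30 _
    rw [show c - 30 + 30 = c by omega] at h2
    have h3 : wt (c - 30) = j := by omega
    exact ⟨by have := wt_le15 h3; omega, h3⟩

lemma G_eq_creflex (j : ℕ) : (G j : ℤ) = creflex j := by
  induction j using Nat.strong_induction_on with
  | _ j ih =>
    match j, ih with
    | 0, _ => decide
    | 1, _ => decide
    | 2, _ => decide
    | 3, _ => decide
    | 4, _ => decide
    | 5, _ => decide
    | (k + 6), ih =>
      have h1 : G (k + 6) = G (k + 4) := Gstep (k + 4) (by omega)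
      have h2 : creflex (k + 6) = creflex (k + 4) := by
        simp only [creflex]
        rcases Nat.even_or_odd k with ⟨c, rfl⟩ | ⟨c, rfl⟩
        · rw [if_neg (by omega), if_neg (by omega), if_neg (by omega), if_neg (by omega),
            if_pos (by omega), if_neg (by omega), if_neg (by omega), if_neg (by omega),
            if_neg (by omega), if_pos (by omega)]
        · rw [if_neg (by omega), if_neg (by omega), if_neg (by omega), if_neg (by omega),
            if_neg (by omega), if_neg (by omega), if_neg (by omega), if_neg (by omega),
            if_neg (by omega), if_neg (by omega)]
      rw [h1, h2]
      exact ih (k + 4) (by omega)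

lemma card_wt {n j : ℕ} (hn : j + 3 ≤ n) :
    (((Finset.range (30 * n)).filter (fun b => wt b = j)).card : ℤ) = creflex j := by
  have hset : (Finset.range (30 * n)).filter (fun b => wt b = j) =
      (Finset.range (15 * j + 1)).filter (fun b => wt b = j) := by
    apply Finset.ext; intro b
    simp only [Finset.mem_filter, Finset.mem_range]
    constructor
    · rintro ⟨h1, h2⟩
      exact ⟨by have := wt_le15 h2; omega, h2⟩
    · rintro ⟨h1, h2⟩
      exact ⟨by have := wt_le15 h2; omega, h2⟩
  rw [hset]
  exact G_eq_creflex j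

lemma ehr_eq {n : ℕ} (hn : 1 ≤ n) :
    ehrhartSeries (deltaQ n) =
      (∑ b ∈ Finset.range (30 * n), (PowerSeries.X : PowerSeries ℤ) ^ (wt b)) *
        (PowerSeries.invOneSubPow ℤ (2 * n + 2 + 1)).val := by
  ext t
  rw [ehrhartSeries, PowerSeries.coeff_mk]
  have hsets : {x : Fin (2 * n + 2) → ℤ | (fun i => (x i : ℝ)) ∈ (t : ℝ) • deltaQ n} =
      {x : Fin (2 * n + 2) → ℤ | (∑ i, x i) ≤ (t : ℤ) ∧
        ∀ i, 0 ≤ (30 * n : ℤ) * x i + ((t : ℤ) - ∑ i, x i) * qvec n i} :=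
    Set.ext fun x => mem_dilate hn t x
  rw [hsets, card_A hn t]
  rw [PowerSeries.invOneSubPow_val_succ_eq_mk_add_choose, Finset.sum_mul, map_sum]
  have hterm : ∀ b ∈ Finset.range (30 * n),
      (PowerSeries.coeff (R := ℤ) t) ((PowerSeries.X : PowerSeries ℤ) ^ (wt b) *
        PowerSeries.mk fun k => (((2 * n + 2 + k).choose (2 * n + 2) : ℕ) : ℤ)) =
      if wt b ≤ t then (((t - wt b + (2 * n + 2)).choose (2 * n + 2) : ℕ) : ℤ) else 0 := by
    intro b _
    rw [PowerSeries.coeff_X_pow_mul']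
    split_ifs with h
    · rw [PowerSeries.coeff_mk, show 2 * n + 2 + (t - wt b) = t - wt b + (2 * n + 2) by omega]
    · rfl
  rw [Finset.sum_congr rfl hterm, ← Finset.sum_filter]
  push_cast
  rfl

theorem stmt7 (j : ℕ) :
    ∃ N : ℕ, 2 ≤ N ∧ ∀ n : ℕ, N ≤ n →
      PowerSeries.coeff (R := ℤ) j
        ((1 - PowerSeries.X : PowerSeries ℤ) ^ (2 * n + 3) * ehrhartSeries (deltaQ n)) =
        creflex j := by
  refine ⟨j + 3, by omega, fun n hn => ?_⟩
  have hn1 : 1 ≤ n := by omega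
  have key : (1 - PowerSeries.X : PowerSeries ℤ) ^ (2 * n + 3) * ehrhartSeries (deltaQ n) =
      ∑ b ∈ Finset.range (30 * n), (PowerSeries.X : PowerSeries ℤ) ^ (wt b) := by
    rw [ehr_eq hn1]
    rw [show (2 * n + 3) = (2 * n + 2 + 1) from rfl]
    rw [← PowerSeries.invOneSubPow_inv_eq_one_sub_pow, ← mul_assoc,
      mul_comm ((PowerSeries.invOneSubPow ℤ (2 * n + 2 + 1)).inv) _, mul_assoc,
      (PowerSeries.invOneSubPow ℤ (2 * n + 2 + 1)).inv_val, mul_one]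
  rw [key, map_sum]
  simp only [PowerSeries.coeff_X_pow]
  have hb : (∑ x ∈ Finset.range (30 * n), if j = wt x then (1:ℤ) else 0) =
      (((Finset.range (30 * n)).filter (fun b => j = wt b)).card : ℤ) := Finset.sum_boole _ _
  rw [hb, show (Finset.range (30 * n)).filter (fun b => j = wt b) =
      (Finset.range (30 * n)).filter (fun b => wt b = j) from
    Finset.filter_congr fun b _ => by simp [eq_comm]]
  exact card_wt hn
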